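/- Suppose a : (0, t₀] → (0,∞) is differentiable, strictly increasing, with a(t) → 0 as t → 0⁺, and suppose there is A > 0 with a(t)^{−n}·ȧ(t) ≤ A for all t ∈ (0,t₀], where n ≤ 0. If n < 0, then the horizon integral I = ∫_0^{t₀} c₀ a(t)ⁿ / a(t) dt diverges (equals +∞). In particular there is no past particle horizon. -/

import Mathlib

open MeasureTheory

/-- No past particle horizon: if `a` is strictly increasing with `a → 0⁺`,
`a^{-n} ȧ ≤ A` and `n < 0`, then the horizon integral
`∫_0^{t₀} c₀ a(t)ⁿ/a(t) dt` diverges to `+∞`. -/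
theorem stmt_11 (t₀ : ℝ) (ht₀ : 0 < t₀) (n : ℝ) (hn : n < 0)
    (c₀ : ℝ) (hc₀ : 0 < c₀)
    (a a' : ℝ → ℝ) (hapos : ∀ t ∈ Set.Ioc 0 t₀, 0 < a t)
    (hderiv : ∀ t ∈ Set.Ioc 0 t₀, HasDerivAt a (a' t) t)
    (hmono : StrictMonoOn a (Set.Ioc 0 t₀))
    (hlim : Filter.Tendsto a (nhdsWithin 0 (Set.Ioi 0)) (nhds 0))
    (A : ℝ) (hA : 0 < A)
    (hbound : ∀ t ∈ Set.Ioc 0 t₀, (a t) ^ (-n) * a' t ≤ A) :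
    ∫⁻ t in Set.Ioc 0 t₀, ENNReal.ofReal (c₀ * (a t) ^ n / a t) = ⊤ := by
  set m : ℝ := 1 - n with hm
  have hm0 : 0 < m := by simp only [hm]; linarith
  -- Key growth bound: `a t ^ m ≤ m * A * t` on `(0, t₀]`.
  have key : ∀ t ∈ Set.Ioc 0 t₀, a t ^ m ≤ m * A * t := by
    intro t ht
    have step : ∀ ε ∈ Set.Ioo (0:ℝ) t, a t ^ m ≤ m * A * t + a ε ^ m := by
      intro ε hε
      have hsub : Set.Icc ε t ⊆ Set.Ioc 0 t₀ := fun x hx =>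
        ⟨lt_of_lt_of_le hε.1 hx.1, hx.2.trans ht.2⟩
      have hg : ∀ x ∈ Set.Icc ε t, HasDerivAt (fun s => m * A * s - a s ^ m)
          (m * A - a' x * m * a x ^ (-n)) x := by
        intro x hx
        have hx' := hsub hx
        have h1 : HasDerivAt (fun s => a s ^ m) (a' x * m * a x ^ (m - 1)) x :=
          (hderiv x hx').rpow_const (Or.inl (hapos x hx').ne')
        have h2 : HasDerivAt (fun s => m * A * s) (m * A) x := by
          simpa using (hasDerivAt_id x).const_mul (m * A)
        have hmn : m - 1 = -n := by simp [hm]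
        rw [← hmn]
        exact h2.sub h1
      have hmonog : MonotoneOn (fun s => m * A * s - a s ^ m) (Set.Icc ε t) := by
        apply monotoneOn_of_deriv_nonneg (convex_Icc _ _)
        · exact fun x hx => ((hg x hx).differentiableAt.continuousAt).continuousWithinAt
        · intro x hx
          rw [interior_Icc] at hx
          exact ((hg x (Set.Ioo_subset_Icc_self hx)).differentiableAt).differentiableWithinAt
        · intro x hx
          rw [interior_Icc] at hx
          rw [(hg x (Set.Ioo_subset_Icc_self hx)).deriv]
          have hb := hbound x (hsub (Set.Ioo_subset_Icc_self hx))
          nlinarith [hm0]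
      have hle := hmonog (Set.left_mem_Icc.2 hε.2.le) (Set.right_mem_Icc.2 hε.2.le) hε.2.le
      simp only at hle
      nlinarith [mul_pos (mul_pos hm0 hA) hε.1]
    have hlim2 : Filter.Tendsto (fun ε => a ε ^ m) (nhdsWithin 0 (Set.Ioi 0)) (nhds 0) := by
      have h := hlim.rpow_const (p := m) (Or.inr hm0.le)
      simpa [Real.zero_rpow hm0.ne'] using h
    have hfin : a t ^ m - m * A * t ≤ 0 := by
      apply ge_of_tendsto hlim2
      filter_upwards [Ioo_mem_nhdsGT_of_mem ⟨le_refl 0, ht.1⟩] with ε hε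
      linarith [step ε hε]
    linarith
  set C : ℝ := c₀ / (m * A) with hC
  have hCpos : 0 < C := by positivity
  -- pointwise lower bound by `C / t`
  have hptwise : ∀ t ∈ Set.Ioc 0 t₀, C * t⁻¹ ≤ c₀ * a t ^ n / a t := by
    intro t ht
    have hat := hapos t ht
    have h1 : c₀ * a t ^ n / a t = c₀ * (a t ^ m)⁻¹ := by
      rw [mul_div_assoc]
      congr 1
      rw [← Real.rpow_neg hat.le, hm, neg_sub, Real.rpow_sub hat, Real.rpow_one]
    have hpow : (0:ℝ) < a t ^ m := Real.rpow_pos_of_pos hat m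
    have h2 : (m * A * t)⁻¹ ≤ (a t ^ m)⁻¹ :=
      inv_anti₀ hpow (key t ht)
    have h3 : C * t⁻¹ = c₀ * (m * A * t)⁻¹ := by
      rw [hC]
      rw [mul_inv, mul_inv, div_eq_mul_inv, mul_inv]
      ring
    rw [h1, h3]
    exact mul_le_mul_of_nonneg_left h2 hc₀.le
  -- the comparison integral diverges
  have htop : ∫⁻ t in Set.Ioc 0 t₀, ENNReal.ofReal (C * t⁻¹) = ⊤ := by
    by_contra h
    have hint : IntegrableOn (fun t : ℝ => C * t⁻¹) (Set.Ioc 0 t₀) := by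
      refine ⟨(Measurable.aestronglyMeasurable (by measurability)), ?_⟩
      rw [hasFiniteIntegral_iff_ofReal]
      · exact lt_top_iff_ne_top.2 h
      · refine (ae_restrict_iff' measurableSet_Ioc).2 (Filter.Eventually.of_forall ?_)
        intro t ht
        have h0 := ht.1
        positivity
    have hint2 : IntegrableOn (fun t : ℝ => t⁻¹) (Set.Ioc 0 t₀) := by
      have h4 : IntegrableOn (fun t : ℝ => C⁻¹ * (C * t⁻¹)) (Set.Ioc 0 t₀) :=
        hint.const_mul C⁻¹
      refine h4.congr_fun (fun t _ => ?_) measurableSet_Ioc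
      field_simp
    have hint3 : IntegrableOn (fun t : ℝ => t ^ (-1 : ℝ)) (Set.Ioo 0 t₀) := by
      refine (hint2.mono_set Set.Ioo_subset_Ioc_self).congr_fun (fun t ht => ?_) measurableSet_Ioo
      rw [Real.rpow_neg_one]
    have := (intervalIntegral.integrableOn_Ioo_rpow_iff ht₀).1 hint3
    linarith
  refine eq_top_mono ?_ htop
  refine lintegral_mono_ae ((ae_restrict_iff' measurableSet_Ioc).2 (Filter.Eventually.of_forall ?_))
  intro t ht
  exact ENNReal.ofReal_le_ofReal (hptwise t ht)
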